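/- For every integer n ≥ 2, the Jacquard language J_n is a finite set and its cardinality satisfies the recursion card(J_n) = 3·card(J_{n-1}) − card(J_{n-2}) (equivalently, card(J_n) + card(J_{n-2}) = 3·card(J_{n-1})). -/

import Mathlib

/-- The Jacquard languages: `Jacquard 0 = {ε}`, `Jacquard 1 = {a₀}`, and, for `n ≥ 2`,
`Jacquard n = Jacquard (n-1)·a₀ ∪ ⋃_{1 ≤ j ≤ n-1} Jacquard (n-j)·(a₁a₂⋯a_j)`,
where a letter `a_j` is modeled by the natural number `j` and a word by a list. -/
def Jacquard : ℕ → Set (List ℕ)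
  | 0 => {[]}
  | 1 => {[0]}
  | n + 2 =>
      ((· ++ [0]) '' Jacquard (n + 1)) ∪
        ⋃ (j : ℕ) (_ : 1 ≤ j ∧ j ≤ n + 1),
          (· ++ (List.range j).map (· + 1)) '' Jacquard (n + 2 - j)
  termination_by n => n
  decreasing_by all_goals omega

/-- For every `n ≥ 2`, the Jacquard language `J_n` is a finite set and
`card (J_n) + card (J_{n-2}) = 3 * card (J_{n-1})`. -/
def F : ℕ → Finset (List ℕ)
  | 0 => {([] : List ℕ)}
  | 1 => {[0]}
  | n + 2 =>
      ((F (n + 1)).image (· ++ [0])) ∪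
        (Finset.Icc 1 (n + 1)).attach.biUnion
          (fun j => (F (n + 2 - j.1)).image (· ++ (List.range j.1).map (· + 1)))
  termination_by n => n
  decreasing_by all_goals
    first
    | omega
    | (have := j.2; simp only [Finset.mem_Icc] at this; omega)

lemma jacquard_eq (n : ℕ) : Jacquard n = ↑(F n) := by
  induction n using Nat.strong_induction_on with
  | _ n ih =>
    match n with
    | 0 => simp [Jacquard, F]
    | 1 => simp [Jacquard, F]
    | n + 2 =>
      rw [Jacquard, F]
      ext w
      simp only [Set.mem_union, Set.mem_iUnion, Set.mem_image, Finset.coe_union,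
        Finset.coe_biUnion, Finset.coe_image, Finset.mem_coe, Finset.mem_union,
        Finset.mem_biUnion, Finset.mem_image, Finset.mem_attach, true_and,
        Subtype.exists, Finset.mem_Icc]
      constructor
      · rintro (⟨v, hv, rfl⟩ | ⟨j, ⟨h1, h2⟩, v, hv, rfl⟩)
        · exact Or.inl ⟨v, by rwa [ih (n+1) (by omega)] at hv, rfl⟩
        · exact Or.inr ⟨j, ⟨h1, h2⟩, trivial, v, by rwa [ih (n+2-j) (by omega)] at hv, rfl⟩
      · rintro (⟨v, hv, rfl⟩ | ⟨j, ⟨h1, h2⟩, -, v, hv, rfl⟩)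
        · exact Or.inl ⟨v, by rwa [ih (n+1) (by omega)], rfl⟩
        · exact Or.inr ⟨j, ⟨h1, h2⟩, v, by rwa [ih (n+2-j) (by omega)], rfl⟩

lemma last_of_mem_image (m j : ℕ) (hj : 1 ≤ j) (w : List ℕ)
    (hw : w ∈ (F m).image (· ++ (List.range j).map (· + 1))) : w.getLast? = some j := by
  simp only [Finset.mem_image] at hw
  obtain ⟨v, -, rfl⟩ := hw
  obtain ⟨k, rfl⟩ : ∃ k, j = k + 1 := ⟨j - 1, by omega⟩
  rw [List.getLast?_append_of_ne_nil _ (by simp), List.range_succ, List.map_append]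
  rw [List.getLast?_append_of_ne_nil _ (by simp)]
  simp

lemma last_of_mem_image0 (m : ℕ) (w : List ℕ)
    (hw : w ∈ (F m).image (· ++ [0])) : w.getLast? = some 0 := by
  simp only [Finset.mem_image] at hw
  obtain ⟨v, -, rfl⟩ := hw
  rw [List.getLast?_append_of_ne_nil _ (by simp)]
  rfl

lemma F_card_rec (n : ℕ) :
    (F (n + 2)).card = (F (n + 1)).card + ∑ j ∈ Finset.Icc 1 (n + 1), (F (n + 2 - j)).card := by
  rw [F]
  rw [Finset.card_union_of_disjoint, Finset.card_image_of_injective _ (List.append_left_injective _),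
    Finset.card_biUnion]
  · congr 1
    rw [← Finset.sum_attach (Finset.Icc 1 (n+1)) (fun j => (F (n + 2 - j)).card)]
    refine Finset.sum_congr rfl fun j _ => ?_
    exact Finset.card_image_of_injective _ (List.append_left_injective _)
  · intro x _ y _ hxy
    rw [Function.onFun, Finset.disjoint_left]
    intro w hw hw'
    have hx := (Finset.mem_Icc.mp x.2).1
    have hy := (Finset.mem_Icc.mp y.2).1
    have e1 := last_of_mem_image _ _ hx w hw
    have e2 := last_of_mem_image _ _ hy w hw'
    exact hxy (Subtype.ext (by rw [e1] at e2; exact Option.some_injective _ e2.symm ▸ rfl))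
  · rw [Finset.disjoint_left]
    intro w hw hw'
    simp only [Finset.mem_biUnion, Finset.mem_attach, true_and, Subtype.exists] at hw'
    obtain ⟨j, hj, hwj⟩ := hw'
    have h1 := (Finset.mem_Icc.mp hj).1
    have h2 := last_of_mem_image _ _ h1 w hwj
    rw [last_of_mem_image0 _ _ hw] at h2
    simp only [Option.some.injEq] at h2
    omega

lemma F_card0 : (F 0).card = 1 := by simp [F]
lemma F_card1 : (F 1).card = 1 := by simp [F]

lemma sum_shift (n : ℕ) :
    ∑ j ∈ Finset.Icc 2 (n + 2), (F (n + 3 - j)).card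
      = ∑ j ∈ Finset.Icc 1 (n + 1), (F (n + 2 - j)).card := by
  refine Finset.sum_bij' (fun j (_ : j ∈ Finset.Icc 2 (n+2)) => j - 1)
    (fun j (_ : j ∈ Finset.Icc 1 (n+1)) => j + 1) ?_ ?_ ?_ ?_ ?_
  all_goals intro a ha
  all_goals simp only [Finset.mem_Icc] at ha ⊢
  · omega
  · omega
  · omega
  · omega
  · rw [show n + 3 - a = n + 2 - (a - 1) from by omega]

lemma F_card_rec3 (n : ℕ) :
    (F (n + 3)).card + (F (n + 1)).card = 3 * (F (n + 2)).card := by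
  have h1 : (F (n + 3)).card
      = (F (n + 2)).card + ∑ j ∈ Finset.Icc 1 (n + 2), (F (n + 3 - j)).card :=
    F_card_rec (n + 1)
  have h2 := F_card_rec n
  have hins : Finset.Icc 1 (n + 2) = insert 1 (Finset.Icc 2 (n + 2)) := by
    ext x; simp only [Finset.mem_Icc, Finset.mem_insert]; omega
  rw [hins, Finset.sum_insert (by simp), sum_shift] at h1
  norm_num at h1
  omega

theorem jacquard_card_recursion (n : ℕ) (hn : 2 ≤ n) :
    (Jacquard n).Finite ∧ (Jacquard (n - 1)).Finite ∧ (Jacquard (n - 2)).Finite ∧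
      (Jacquard n).ncard + (Jacquard (n - 2)).ncard = 3 * (Jacquard (n - 1)).ncard := by
  have hf : ∀ m, (Jacquard m).Finite := fun m => by
    rw [jacquard_eq]; exact Finset.finite_toSet _
  refine ⟨hf n, hf _, hf _, ?_⟩
  simp only [jacquard_eq, Set.ncard_coe_finset]
  match n, hn with
  | 2, _ =>
      show (F 2).card + (F 0).card = 3 * (F 1).card
      have h := F_card_rec 0
      simp [Finset.Icc_self, F_card1, F_card0] at h ⊢
      omega
  | (m + 3), _ =>
      show (F (m + 3)).card + (F (m + 1)).card = 3 * (F (m + 2)).card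
      exact F_card_rec3 m
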